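/- arXiv:math/0502134 — 3 statements merged into one kernel-verified Lean document; each statement's English description precedes it below -/
import Mathlib

section
/- For every integer n ≥ 0 and every w ∈ ℤ_p, the sequence N ↦ ((1−u)/(1−u^{p^N}))^r · Σ_{x_1=0}^{p^N−1} ⋯ Σ_{x_r=0}^{p^N−1} [w + a_1x_1 + ⋯ + a_rx_r : q]^n · u^{x_1+⋯+x_r} converges in ℂ_p as N → ∞, and its limit equals H_n^{(r)}(w,u,q|a_1,…,a_r) = (1−u)^r (1−q)^{−n} Σ_{l=0}^n binom(n,l) (−1)^l q^{lw} Π_{j=1}^r (1−q^{l·a_j}u)^{−1}. -/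
open Filter Finset

/-- For `q` in a normed field and a `p`-adic integer `z`, the power `q^z`, defined as the
limit of `q^(z mod p^N)` (for convergent `q` this agrees with `exp_p (z · log_p q)`). -/
noncomputable def qpow {p : ℕ} [Fact p.Prime] {K : Type*} [NormedField K] (q : K) (z : ℤ_[p]) :
    K :=
  limUnder atTop fun N : ℕ => q ^ (z.appr N)

/-- The `q`-number `[z : q] = (1 - q^z)/(1 - q)` for a `p`-adic integer `z`. -/
noncomputable def qnum {p : ℕ} [Fact p.Prime] {K : Type*} [NormedField K] (q : K) (z : ℤ_[p]) :
    K :=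
  (1 - qpow q z) / (1 - q)

/-- The `q`-analogue of the Euler–Barnes polynomial
`H_n^{(r)}(w, u, q | a_1, …, a_r)
  = (1-u)^r (1-q)^{-n} ∑_{l=0}^n C(n,l) (-1)^l q^{lw} ∏_j (1 - q^{l a_j} u)⁻¹`. -/
noncomputable def qEulerBarnes {p : ℕ} [Fact p.Prime] {K : Type*} [NormedField K]
    (r n : ℕ) (w : ℤ_[p]) (u q : K) (a : Fin r → ℤ_[p]) : K :=
  (1 - u) ^ r * ((1 - q)⁻¹) ^ n *
    ∑ l ∈ Finset.range (n + 1),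
      (n.choose l : K) * (-1) ^ l * qpow q ((l : ℤ_[p]) * w) *
        ∏ j, (1 - qpow q ((l : ℤ_[p]) * a j) * u)⁻¹


lemma one_sub_pow_expand {R : Type*} [CommRing R] (x : R) (n : ℕ) :
    (1 - x) ^ n = ∑ l ∈ Finset.range (n + 1), (n.choose l : R) * (-1) ^ l * x ^ l := by
  rw [sub_eq_add_neg, add_comm, add_pow]
  refine Finset.sum_congr rfl fun l _ => ?_
  rw [one_pow, neg_pow]
  ring


section Aux

variable {p : ℕ} [hp : Fact p.Prime] {K : Type*} [NormedField K] [IsUltrametricDist K]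

lemma norm_eq_one_of_norm_one_sub_lt {x : K} (hx : ‖1 - x‖ < 1) : ‖x‖ = 1 := by
  rcases le_or_gt ‖x‖ 1 with h | h
  · refine le_antisymm h ?_
    by_contra hlt
    push_neg at hlt
    have h1 : ‖(1 : K)‖ ≤ max ‖1 - x‖ ‖x‖ := by
      simpa using IsUltrametricDist.norm_add_le_max (1 - x) x
    rw [norm_one] at h1
    rcases max_cases ‖1 - x‖ ‖x‖ with ⟨he, _⟩ | ⟨he, _⟩ <;> rw [he] at h1 <;> linarith
  · exfalso
    have h1 : ‖x‖ ≤ max ‖(1:K)‖ ‖-(1 - x)‖ := by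
      have hx' : x = 1 + -(1 - x) := by ring
      nth_rewrite 1 [hx']
      exact IsUltrametricDist.norm_add_le_max (1:K) (-(1-x))
    rw [norm_one, norm_neg] at h1
    rcases max_cases (1:ℝ) ‖1 - x‖ with ⟨he, _⟩ | ⟨he, _⟩ <;> rw [he] at h1 <;> linarith

lemma one_sub_pow_norm_le {Q : K} (h : ‖1 - Q‖ < 1) (m : ℕ) : ‖1 - Q ^ m‖ ≤ ‖1 - Q‖ := by
  induction m with
  | zero => simpa using norm_nonneg _
  | succ m ih =>
    have hQ : ‖Q‖ = 1 := norm_eq_one_of_norm_one_sub_lt h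
    have hsplit : 1 - Q ^ (m + 1) = (1 - Q) + Q * (1 - Q ^ m) := by ring
    rw [hsplit]
    refine (IsUltrametricDist.norm_add_le_max _ _).trans (max_le le_rfl ?_)
    rw [norm_mul, hQ, one_mul]
    exact ih

/-- one prime-power step of descent -/
lemma one_sub_pow_p_norm_le (hpK : ‖(p : K)‖ = (p : ℝ)⁻¹) {Q : K}
    (h1 : ‖1 - Q‖ < 1) (h2 : ‖1 - Q‖ ^ (p - 1) ≤ (p : ℝ)⁻¹) :
    ‖1 - Q ^ p‖ ≤ (p : ℝ)⁻¹ * ‖1 - Q‖ := by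
  have hp1 : 1 < p := hp.out.one_lt
  set t : K := 1 - Q with ht
  have hQ : Q = 1 + -t := by rw [ht]; ring
  have expand : Q ^ p = ∑ m ∈ range (p + 1), (-t) ^ m * 1 ^ (p - m) * (p.choose m) := by
    rw [hQ, add_comm, add_pow]
  have split : Q ^ p = 1 + ∑ m ∈ Ico 1 (p + 1), (-t) ^ m * 1 ^ (p - m) * (p.choose m) := by
    rw [expand, range_eq_Ico, Finset.sum_eq_sum_Ico_succ_bot (by omega)]
    simp
  have hmain : 1 - Q ^ p = -∑ m ∈ Ico 1 (p + 1), (-t) ^ m * 1 ^ (p - m) * (p.choose m) := by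
    rw [split]; ring
  rw [hmain, norm_neg]
  refine IsUltrametricDist.norm_sum_le_of_forall_le_of_nonneg
    (by positivity) ?_
  intro m hm
  rw [Finset.mem_Ico] at hm
  obtain ⟨hm1, hm2⟩ := hm
  rw [one_pow, mul_one, norm_mul, norm_pow, norm_neg]
  rcases eq_or_lt_of_le (Nat.lt_succ_iff.mp hm2) with hmp | hmp
  · -- m = p
    subst hmp
    rw [Nat.choose_self]
    push_cast
    rw [norm_one, mul_one]
    have : ‖t‖ ^ m = ‖t‖ ^ (m - 1) * ‖t‖ := by
      rw [← pow_succ]; congr 1; omega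
    rw [this]
    exact mul_le_mul_of_nonneg_right h2 (norm_nonneg _)
  · -- 1 ≤ m < p
    obtain ⟨d, hd⟩ := hp.out.dvd_choose_self (by omega) hmp
    have hC : ‖(p.choose m : K)‖ ≤ (p : ℝ)⁻¹ := by
      rw [hd]
      push_cast
      rw [norm_mul, hpK]
      calc (p : ℝ)⁻¹ * ‖(d : K)‖ ≤ (p : ℝ)⁻¹ * 1 := by
            exact mul_le_mul_of_nonneg_left (IsUltrametricDist.norm_natCast_le_one K d)
              (by positivity)
        _ = (p : ℝ)⁻¹ := mul_one _
    have htm : ‖t‖ ^ m ≤ ‖t‖ := by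
      calc ‖t‖ ^ m ≤ ‖t‖ ^ 1 := pow_le_pow_of_le_one (norm_nonneg _) h1.le hm1
        _ = ‖t‖ := pow_one _
    calc ‖t‖ ^ m * ‖(p.choose m : K)‖ ≤ ‖t‖ * (p : ℝ)⁻¹ :=
          mul_le_mul htm hC (norm_nonneg _) (norm_nonneg _)
      _ = (p : ℝ)⁻¹ * ‖t‖ := mul_comm _ _

lemma one_sub_pow_pN_norm_le (hpK : ‖(p : K)‖ = (p : ℝ)⁻¹) {q : K}
    (h1 : ‖1 - q‖ < 1) (h2 : ‖1 - q‖ ^ (p - 1) ≤ (p : ℝ)⁻¹) (N m : ℕ) :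
    ‖1 - q ^ (p ^ N * m)‖ ≤ ((p : ℝ)⁻¹) ^ N * ‖1 - q‖ := by
  have hp1 : 1 < p := hp.out.one_lt
  have hpinv : (p : ℝ)⁻¹ ≤ 1 := by
    rw [inv_le_one_iff₀]; right; exact_mod_cast hp1.le
  have hpinvpow : ∀ N : ℕ, ((p : ℝ)⁻¹) ^ N ≤ 1 := fun N =>
    pow_le_one₀ (by positivity) hpinv
  have base : ∀ N : ℕ, ‖1 - q ^ (p ^ N)‖ ≤ ((p : ℝ)⁻¹) ^ N * ‖1 - q‖ := by
    intro N
    induction N with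
    | zero => simp
    | succ N ih =>
      have hle : ‖1 - q ^ p ^ N‖ ≤ ‖1 - q‖ := by
        refine ih.trans ?_
        calc ((p : ℝ)⁻¹) ^ N * ‖1 - q‖ ≤ 1 * ‖1 - q‖ :=
              mul_le_mul_of_nonneg_right (hpinvpow N) (norm_nonneg _)
          _ = ‖1 - q‖ := one_mul _
      have hlt : ‖1 - q ^ p ^ N‖ < 1 := lt_of_le_of_lt hle h1
      have hpow : ‖1 - q ^ p ^ N‖ ^ (p - 1) ≤ (p : ℝ)⁻¹ :=
        le_trans (pow_le_pow_left₀ (norm_nonneg _) hle _) h2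
      have step := one_sub_pow_p_norm_le hpK hlt hpow
      rw [← pow_mul, ← pow_succ] at step
      calc ‖1 - q ^ p ^ (N + 1)‖ ≤ (p : ℝ)⁻¹ * ‖1 - q ^ p ^ N‖ := step
        _ ≤ (p : ℝ)⁻¹ * (((p : ℝ)⁻¹) ^ N * ‖1 - q‖) :=
            mul_le_mul_of_nonneg_left ih (by positivity)
        _ = ((p : ℝ)⁻¹) ^ (N + 1) * ‖1 - q‖ := by ring
  have hQlt : ‖1 - q ^ p ^ N‖ < 1 := by
    have : ((p : ℝ)⁻¹) ^ N * ‖1 - q‖ ≤ ‖1 - q‖ := by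
      calc ((p : ℝ)⁻¹) ^ N * ‖1 - q‖ ≤ 1 * ‖1 - q‖ :=
            mul_le_mul_of_nonneg_right (hpinvpow N) (norm_nonneg _)
        _ = ‖1 - q‖ := one_mul _
    exact lt_of_le_of_lt ((base N).trans this) h1
  rw [pow_mul]
  exact (one_sub_pow_norm_le hQlt m).trans (base N)

lemma pow_sub_pow_norm_le (hpK : ‖(p : K)‖ = (p : ℝ)⁻¹) {q : K}
    (h1 : ‖1 - q‖ < 1) (h2 : ‖1 - q‖ ^ (p - 1) ≤ (p : ℝ)⁻¹) {a b N : ℕ}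
    (hd : ((p : ℤ)) ^ N ∣ (a : ℤ) - b) :
    ‖q ^ a - q ^ b‖ ≤ ((p : ℝ)⁻¹) ^ N * ‖1 - q‖ := by
  have hq1 : ‖q‖ = 1 := norm_eq_one_of_norm_one_sub_lt h1
  have main : ∀ a b : ℕ, b ≤ a → ((p : ℤ)) ^ N ∣ (a : ℤ) - b →
      ‖q ^ a - q ^ b‖ ≤ ((p : ℝ)⁻¹) ^ N * ‖1 - q‖ := by
    intro a b hba hd
    have hdn : p ^ N ∣ a - b := by
      have : ((a - b : ℕ) : ℤ) = (a : ℤ) - b := by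
        push_cast [Nat.cast_sub hba]; ring
      have := hd
      rw [show ((p:ℤ))^N = ((p^N : ℕ) : ℤ) by push_cast; ring] at this
      rw [show (a : ℤ) - b = ((a - b : ℕ) : ℤ) by push_cast [Nat.cast_sub hba]; ring] at this
      exact_mod_cast this
    obtain ⟨m, hm⟩ := hdn
    have ha : a = b + p ^ N * m := by omega
    rw [ha, pow_add]
    have : q ^ b * q ^ (p ^ N * m) - q ^ b = q ^ b * (q ^ (p ^ N * m) - 1) := by ring
    rw [this, norm_mul, norm_pow, hq1, one_pow, one_mul, ← norm_neg, neg_sub]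
    exact one_sub_pow_pN_norm_le hpK h1 h2 N m
  rcases le_total b a with hba | hab
  · exact main a b hba hd
  · rw [← norm_neg, neg_sub]
    refine main b a hab ?_
    have := hd.neg_right
    rw [neg_sub] at this
    exact this

end Aux
section Aux2

variable {p : ℕ} [hp : Fact p.Prime] {K : Type*} [NormedField K] [IsUltrametricDist K]
  [CompleteSpace K] {q : K}

lemma tendsto_inv_pow_mul (c : ℝ) :
    Tendsto (fun N : ℕ => ((p : ℝ)⁻¹) ^ N * c) atTop (nhds 0) := by
  have hp1 : 1 < p := hp.out.one_lt
  have h0 : Tendsto (fun N : ℕ => ((p : ℝ)⁻¹) ^ N) atTop (nhds 0) := by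
    refine tendsto_pow_atTop_nhds_zero_of_lt_one (by positivity) ?_
    rw [inv_lt_one_iff₀]; right; exact_mod_cast hp1
  simpa using h0.mul_const c

lemma appr_int_dvd (z : ℤ_[p]) {N M : ℕ} (h : N ≤ M) :
    ((p : ℤ)) ^ N ∣ (z.appr M : ℤ) - z.appr N := by
  obtain ⟨m, hm⟩ := z.dvd_appr_sub_appr N M h
  have hle : z.appr N ≤ z.appr M := z.appr_mono h
  have : (z.appr M : ℤ) - z.appr N = ((z.appr M - z.appr N : ℕ) : ℤ) := by
    rw [Nat.cast_sub hle]
  rw [this, hm]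
  push_cast
  exact Dvd.intro _ rfl

lemma cauchySeq_q_appr (hpK : ‖(p : K)‖ = (p : ℝ)⁻¹)
    (h1 : ‖1 - q‖ < 1) (h2 : ‖1 - q‖ ^ (p - 1) ≤ (p : ℝ)⁻¹) (z : ℤ_[p]) :
    CauchySeq (fun N : ℕ => q ^ (z.appr N)) := by
  refine cauchySeq_of_le_tendsto_0 (fun N => ((p : ℝ)⁻¹) ^ N * ‖1 - q‖) ?_
    (tendsto_inv_pow_mul _)
  intro n m N hn hm
  rw [dist_eq_norm]
  refine pow_sub_pow_norm_le hpK h1 h2 ?_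
  have d1 := appr_int_dvd z hn
  have d2 := appr_int_dvd z hm
  have := dvd_sub d1 d2
  rw [show ((z.appr n : ℤ) - z.appr N) - ((z.appr m : ℤ) - z.appr N)
      = (z.appr n : ℤ) - z.appr m by ring] at this
  exact this

lemma tendsto_qpow (hpK : ‖(p : K)‖ = (p : ℝ)⁻¹)
    (h1 : ‖1 - q‖ < 1) (h2 : ‖1 - q‖ ^ (p - 1) ≤ (p : ℝ)⁻¹) (z : ℤ_[p]) :
    Tendsto (fun N : ℕ => q ^ (z.appr N)) atTop (nhds (qpow q z)) :=
  (cauchySeq_q_appr hpK h1 h2 z).tendsto_limUnder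

lemma tendsto_qpow_of_approx (hpK : ‖(p : K)‖ = (p : ℝ)⁻¹)
    (h1 : ‖1 - q‖ < 1) (h2 : ‖1 - q‖ ^ (p - 1) ≤ (p : ℝ)⁻¹) (z : ℤ_[p]) (A : ℕ → ℕ)
    (hA : ∀ N : ℕ, ‖z - (A N : ℤ_[p])‖ ≤ (p : ℝ) ^ (-(N : ℤ))) :
    Tendsto (fun N : ℕ => q ^ (A N)) atTop (nhds (qpow q z)) := by
  refine (tendsto_qpow hpK h1 h2 z).congr_dist ?_
  have key : ∀ N : ℕ, dist (q ^ z.appr N) (q ^ A N) ≤ ((p : ℝ)⁻¹) ^ N * ‖1 - q‖ := by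
    intro N
    rw [dist_eq_norm]
    refine pow_sub_pow_norm_le hpK h1 h2 ?_
    -- ‖(appr - A N : ℤ) as padic‖ ≤ p^{-N}
    have hz : ‖z - (z.appr N : ℤ_[p])‖ ≤ (p : ℝ) ^ (-(N : ℤ)) := by
      rw [PadicInt.norm_le_pow_iff_mem_span_pow]
      exact z.appr_spec N
    have hsum : ‖((z.appr N : ℤ_[p])) - (A N : ℤ_[p])‖ ≤ (p : ℝ) ^ (-(N : ℤ)) := by
      have : ((z.appr N : ℤ_[p])) - (A N : ℤ_[p])
          = -(z - (z.appr N : ℤ_[p])) + (z - (A N : ℤ_[p])) := by ring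
      rw [this]
      refine (PadicInt.nonarchimedean _ _).trans (max_le ?_ (hA N))
      rw [norm_neg]; exact hz
    rw [← PadicInt.norm_int_le_pow_iff_dvd]
    push_cast
    exact hsum
  exact squeeze_zero (fun _ => dist_nonneg) key (tendsto_inv_pow_mul _)

lemma qpow_nat_mul (hpK : ‖(p : K)‖ = (p : ℝ)⁻¹)
    (h1 : ‖1 - q‖ < 1) (h2 : ‖1 - q‖ ^ (p - 1) ≤ (p : ℝ)⁻¹) (z : ℤ_[p]) (l : ℕ) :
    qpow q ((l : ℤ_[p]) * z) = (qpow q z) ^ l := by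
  refine tendsto_nhds_unique
    (tendsto_qpow_of_approx hpK h1 h2 _ (fun N => l * z.appr N) ?_) ?_
  · intro N
    have : (l : ℤ_[p]) * z - ((l * z.appr N : ℕ) : ℤ_[p])
        = (l : ℤ_[p]) * (z - (z.appr N : ℤ_[p])) := by push_cast; ring
    rw [this]
    calc ‖(l : ℤ_[p]) * (z - (z.appr N : ℤ_[p]))‖
        ≤ ‖(l : ℤ_[p])‖ * ‖z - (z.appr N : ℤ_[p])‖ := norm_mul_le _ _
      _ ≤ 1 * ((p : ℝ) ^ (-(N : ℤ))) := by
          refine mul_le_mul (PadicInt.norm_le_one _) ?_ (norm_nonneg _) zero_le_one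
          rw [PadicInt.norm_le_pow_iff_mem_span_pow]
          exact z.appr_spec N
      _ = (p : ℝ) ^ (-(N : ℤ)) := one_mul _
  · have : (fun N : ℕ => q ^ (l * z.appr N)) = fun N => (q ^ z.appr N) ^ l := by
      funext N; rw [← pow_mul, mul_comm]
    rw [this]
    exact (tendsto_qpow hpK h1 h2 z).pow l

lemma qpow_add_sum (hpK : ‖(p : K)‖ = (p : ℝ)⁻¹)
    (h1 : ‖1 - q‖ < 1) (h2 : ‖1 - q‖ ^ (p - 1) ≤ (p : ℝ)⁻¹) (w : ℤ_[p]) {r : ℕ}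
    (a : Fin r → ℤ_[p]) (m : Fin r → ℕ) :
    qpow q (w + ∑ j, a j * (m j : ℤ_[p]))
      = qpow q w * ∏ j, (qpow q (a j)) ^ (m j) := by
  refine tendsto_nhds_unique
    (tendsto_qpow_of_approx hpK h1 h2 _
      (fun N => w.appr N + ∑ j, (a j).appr N * m j) ?_) ?_
  · intro N
    have hsplit : ∑ j, ((a j - ((a j).appr N : ℤ_[p])) * (m j : ℤ_[p]))
        = (∑ j, a j * (m j : ℤ_[p])) - ∑ j, (((a j).appr N : ℤ_[p])) * (m j : ℤ_[p]) := by
      rw [← Finset.sum_sub_distrib]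
      exact Finset.sum_congr rfl fun j _ => by ring
    have hrw : (w + ∑ j, a j * (m j : ℤ_[p]))
        - ((w.appr N + ∑ j, (a j).appr N * m j : ℕ) : ℤ_[p])
        = (w - (w.appr N : ℤ_[p]))
          + ∑ j, ((a j - ((a j).appr N : ℤ_[p])) * (m j : ℤ_[p])) := by
      rw [hsplit]
      push_cast
      ring
    rw [hrw]
    refine (PadicInt.nonarchimedean _ _).trans (max_le ?_ ?_)
    · rw [PadicInt.norm_le_pow_iff_mem_span_pow]; exact w.appr_spec N
    · refine IsUltrametricDist.norm_sum_le_of_forall_le_of_nonneg (by positivity) ?_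
      intro j _
      calc ‖(a j - ((a j).appr N : ℤ_[p])) * (m j : ℤ_[p])‖
          ≤ ‖a j - ((a j).appr N : ℤ_[p])‖ * ‖(m j : ℤ_[p])‖ := norm_mul_le _ _
        _ ≤ ((p : ℝ) ^ (-(N : ℤ))) * 1 := by
            refine mul_le_mul ?_ (PadicInt.norm_le_one _) (norm_nonneg _) ?_
            · rw [PadicInt.norm_le_pow_iff_mem_span_pow]; exact (a j).appr_spec N
            · positivity
        _ = (p : ℝ) ^ (-(N : ℤ)) := mul_one _
  · have hfun : (fun N : ℕ => q ^ (w.appr N + ∑ j, (a j).appr N * m j))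
        = fun N => q ^ w.appr N * ∏ j, (q ^ (a j).appr N) ^ (m j) := by
      funext N
      rw [pow_add]
      congr 1
      rw [← Finset.prod_pow_eq_pow_sum]
      apply Finset.prod_congr rfl
      intro j _
      rw [← pow_mul]
    rw [hfun]
    exact (tendsto_qpow hpK h1 h2 w).mul
      (tendsto_finset_prod _ fun j _ => (tendsto_qpow hpK h1 h2 (a j)).pow (m j))

lemma one_sub_qpow_norm_le (hpK : ‖(p : K)‖ = (p : ℝ)⁻¹)
    (h1 : ‖1 - q‖ < 1) (h2 : ‖1 - q‖ ^ (p - 1) ≤ (p : ℝ)⁻¹) (z : ℤ_[p]) :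
    ‖1 - qpow q z‖ ≤ ‖1 - q‖ := by
  have ht : Tendsto (fun N : ℕ => ‖1 - q ^ z.appr N‖) atTop (nhds ‖1 - qpow q z‖) :=
    ((tendsto_const_nhds.sub (tendsto_qpow hpK h1 h2 z)).norm)
  exact le_of_tendsto ht (Filter.Eventually.of_forall fun N => one_sub_pow_norm_le h1 _)

lemma one_sub_qpow_pow_norm_le (hpK : ‖(p : K)‖ = (p : ℝ)⁻¹)
    (h1 : ‖1 - q‖ < 1) (h2 : ‖1 - q‖ ^ (p - 1) ≤ (p : ℝ)⁻¹) (z : ℤ_[p]) (N : ℕ) :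
    ‖1 - (qpow q z) ^ (p ^ N)‖ ≤ ((p : ℝ)⁻¹) ^ N * ‖1 - q‖ := by
  have ht : Tendsto (fun M : ℕ => ‖1 - (q ^ z.appr M) ^ (p ^ N)‖) atTop
      (nhds ‖1 - (qpow q z) ^ (p ^ N)‖) :=
    (tendsto_const_nhds.sub ((tendsto_qpow hpK h1 h2 z).pow (p ^ N))).norm
  refine le_of_tendsto ht (Filter.Eventually.of_forall fun M => ?_)
  rw [← pow_mul, mul_comm]
  exact one_sub_pow_pN_norm_le hpK h1 h2 N (z.appr M)

lemma one_le_norm_one_sub_mul {u B : K} (hu1 : 1 ≤ ‖1 - u‖) (hB : ‖1 - B‖ < 1) :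
    1 ≤ ‖1 - B * u‖ := by
  rcases le_or_gt ‖u‖ 1 with h | h
  · by_contra hlt
    push_neg at hlt
    have key : ‖1 - u‖ ≤ max ‖1 - B * u‖ ‖(B - 1) * u‖ := by
      have : (1 : K) - u = (1 - B * u) + (B - 1) * u := by ring
      rw [this]
      exact IsUltrametricDist.norm_add_le_max _ _
    have h2 : ‖(B - 1) * u‖ < 1 := by
      rw [norm_mul]
      calc ‖B - 1‖ * ‖u‖ ≤ ‖B - 1‖ * 1 := by
            exact mul_le_mul_of_nonneg_left h (norm_nonneg _)
        _ = ‖B - 1‖ := mul_one _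
        _ < 1 := by rw [← norm_neg, neg_sub]; exact hB
    rcases max_cases ‖1 - B * u‖ ‖(B - 1) * u‖ with ⟨he, _⟩ | ⟨he, _⟩ <;>
      rw [he] at key <;> linarith
  · have hBn : ‖B‖ = 1 := norm_eq_one_of_norm_one_sub_lt hB
    have hBu : ‖B * u‖ > 1 := by rw [norm_mul, hBn, one_mul]; exact h
    have key : ‖B * u‖ ≤ max ‖(1 : K)‖ ‖-(1 - B * u)‖ := by
      have : B * u = 1 + -(1 - B * u) := by ring
      nth_rewrite 1 [this]
      exact IsUltrametricDist.norm_add_le_max _ _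
    rw [norm_one, norm_neg] at key
    rcases max_cases (1:ℝ) ‖1 - B * u‖ with ⟨he, _⟩ | ⟨he, hle⟩ <;> rw [he] at key
    · linarith
    · linarith

end Aux2

/-- For every `n ≥ 0` and `w ∈ ℤ_p`, the sequence
`N ↦ ((1-u)/(1-u^{p^N}))^r · ∑_{x_1,…,x_r=0}^{p^N-1} [w + ∑_j a_j x_j : q]^n · u^{∑_j x_j}`
converges, with limit the `q`-Euler–Barnes polynomial `H_n^{(r)}(w,u,q|a_1,…,a_r)`. -/
theorem tendsto_qEulerBarnes_sum
    {p : ℕ} [Fact p.Prime] {K : Type*} [NormedField K] [CompleteSpace K]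
    [IsUltrametricDist K] (hpK : ‖(p : K)‖ = (p : ℝ)⁻¹)
    (r : ℕ) (hr : 1 ≤ r) (a : Fin r → ℤ_[p]) (ha : ∀ j, a j ≠ 0)
    (u q : K) (hu : ∀ f : ℕ, 1 ≤ f → 1 ≤ ‖1 - u ^ f‖)
    (hq0 : 0 < ‖1 - q‖) (hq1 : ‖1 - q‖ < (p : ℝ) ^ (-(1 : ℝ) / ((p : ℝ) - 1)))
    (n : ℕ) (w : ℤ_[p]) :
    Tendsto
      (fun N : ℕ =>
        ((1 - u) / (1 - u ^ p ^ N)) ^ r *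
          ∑ x ∈ Fintype.piFinset fun _ : Fin r => Finset.range (p ^ N),
            (qnum q (w + ∑ j, a j * (x j : ℤ_[p]))) ^ n * u ^ (∑ j, x j))
      atTop (nhds (qEulerBarnes r n w u q a)) := by
  have hp1 : 1 < p := (Fact.out : p.Prime).one_lt
  have hpR : (1 : ℝ) < p := by exact_mod_cast hp1
  -- basic consequences of the hypothesis on q
  have h1 : ‖1 - q‖ < 1 := by
    refine hq1.trans (Real.rpow_lt_one_of_one_lt_of_neg hpR ?_)
    apply div_neg_of_neg_of_pos (by norm_num)
    linarith
  have h2 : ‖1 - q‖ ^ (p - 1) ≤ (p : ℝ)⁻¹ := by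
    have hcast : ((p - 1 : ℕ) : ℝ) = (p : ℝ) - 1 := by
      push_cast [Nat.cast_sub hp1.le]
      ring
    have hb : ((p : ℝ) ^ (-(1 : ℝ) / ((p : ℝ) - 1))) ^ (p - 1) = (p : ℝ)⁻¹ := by
      rw [← Real.rpow_natCast ((p : ℝ) ^ (-(1 : ℝ) / ((p : ℝ) - 1))) (p - 1),
        ← Real.rpow_mul (by positivity), hcast,
        div_mul_cancel₀ _ (by linarith : (p : ℝ) - 1 ≠ 0)]
      exact Real.rpow_neg_one _
    calc ‖1 - q‖ ^ (p - 1) ≤ ((p : ℝ) ^ (-(1 : ℝ) / ((p : ℝ) - 1))) ^ (p - 1) :=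
          pow_le_pow_left₀ (norm_nonneg _) hq1.le _
      _ = (p : ℝ)⁻¹ := hb
  have hu1 : (1 : ℝ) ≤ ‖1 - u‖ := by simpa using hu 1 le_rfl
  have hBlt : ∀ (l : ℕ) (j : Fin r), ‖1 - qpow q ((l : ℤ_[p]) * a j)‖ < 1 :=
    fun l j => (one_sub_qpow_norm_le hpK h1 h2 _).trans_lt h1
  have hvne : ∀ (l : ℕ) (j : Fin r), qpow q ((l : ℤ_[p]) * a j) * u ≠ 1 := by
    intro l j hcon
    have := one_le_norm_one_sub_mul hu1 (hBlt l j)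
    rw [hcon] at this
    norm_num at this
  have hvne' : ∀ (l : ℕ) (j : Fin r), (1 : K) - qpow q ((l : ℤ_[p]) * a j) * u ≠ 0 :=
    fun l j => sub_ne_zero.mpr fun hcon => hvne l j hcon.symm
  have huN : ∀ N : ℕ, (1 : K) - u ^ p ^ N ≠ 0 := by
    intro N hcon
    have := hu (p ^ N) (Nat.one_le_pow _ _ (Fact.out : p.Prime).pos)
    rw [hcon] at this
    norm_num at this
  -- the key algebraic identity for each N
  have key : ∀ N : ℕ,
      ((1 - u) / (1 - u ^ p ^ N)) ^ r *
        ∑ x ∈ Fintype.piFinset fun _ : Fin r => Finset.range (p ^ N),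
          (qnum q (w + ∑ j, a j * (x j : ℤ_[p]))) ^ n * u ^ (∑ j, x j)
      = ((1 - q)⁻¹) ^ n * ∑ l ∈ Finset.range (n + 1),
          (n.choose l : K) * (-1) ^ l * qpow q ((l : ℤ_[p]) * w) *
            ∏ j, ((1 - u) *
              ((1 - (qpow q ((l : ℤ_[p]) * a j) * u) ^ p ^ N) / (1 - u ^ p ^ N)) *
              (1 - qpow q ((l : ℤ_[p]) * a j) * u)⁻¹) := by
    intro N
    have step1 : ∀ x : Fin r → ℕ,
        (qnum q (w + ∑ j, a j * (x j : ℤ_[p]))) ^ n * u ^ (∑ j, x j)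
        = ((1 - q)⁻¹) ^ n * ∑ l ∈ Finset.range (n + 1),
            (n.choose l : K) * (-1) ^ l * qpow q ((l : ℤ_[p]) * w) *
              ∏ j, (qpow q ((l : ℤ_[p]) * a j) * u) ^ (x j) := by
      intro x
      simp only [qnum]
      rw [qpow_add_sum hpK h1 h2 w a x, div_pow, div_eq_mul_inv, ← inv_pow,
        one_sub_pow_expand, Finset.sum_mul, Finset.sum_mul, Finset.mul_sum]
      refine Finset.sum_congr rfl fun l _ => ?_
      rw [qpow_nat_mul hpK h1 h2 w l]
      have hprod : ∏ j, (qpow q ((l : ℤ_[p]) * a j) * u) ^ (x j)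
          = ∏ j, ((qpow q (a j)) ^ l * u) ^ (x j) :=
        Finset.prod_congr rfl fun j _ => by rw [qpow_nat_mul hpK h1 h2 (a j) l]
      rw [hprod]
      have hP : (qpow q w * ∏ j, qpow q (a j) ^ x j) ^ l * u ^ (∑ j, x j)
          = (qpow q w) ^ l * ∏ j, ((qpow q (a j)) ^ l * u) ^ (x j) := by
        calc (qpow q w * ∏ j, qpow q (a j) ^ x j) ^ l * u ^ (∑ j, x j)
            = (qpow q w) ^ l * ((∏ j, (qpow q (a j) ^ x j) ^ l) * ∏ j, u ^ (x j)) := by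
              rw [mul_pow, ← Finset.prod_pow, ← Finset.prod_pow_eq_pow_sum, mul_assoc]
          _ = (qpow q w) ^ l * ∏ j, ((qpow q (a j)) ^ l * u) ^ (x j) := by
              rw [← Finset.prod_mul_distrib]
              congr 1
              exact Finset.prod_congr rfl fun j _ => by rw [mul_pow, pow_right_comm]
      linear_combination ((n.choose l : K) * (-1) ^ l * ((1 - q)⁻¹) ^ n) * hP
    rw [Finset.sum_congr rfl fun x _ => step1 x, ← Finset.mul_sum, mul_left_comm]
    congr 1
    rw [Finset.sum_comm, Finset.mul_sum]
    refine Finset.sum_congr rfl fun l _ => ?_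
    rw [← Finset.mul_sum, ← Finset.prod_univ_sum]
    have hpref : ((1 - u) / (1 - u ^ p ^ N)) ^ r
        = ∏ _j : Fin r, ((1 - u) / (1 - u ^ p ^ N)) := by
      rw [Finset.prod_const, Finset.card_univ, Fintype.card_fin]
    rw [mul_left_comm, hpref, ← Finset.prod_mul_distrib]
    congr 1
    refine Finset.prod_congr rfl fun j _ => ?_
    rw [geom_sum_eq (hvne l j) (p ^ N)]
    field_simp [huN N, sub_ne_zero.mpr (hvne l j), hvne' l j]
    rw [div_eq_div_iff (by rw [mul_comm]; exact sub_ne_zero.mpr (hvne l j)) (by rw [mul_comm]; exact hvne' l j)]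
    ring
  -- convergence of the ratio factors
  have hR : ∀ (l : ℕ) (j : Fin r),
      Tendsto (fun N : ℕ =>
        (1 - (qpow q ((l : ℤ_[p]) * a j) * u) ^ p ^ N) / (1 - u ^ p ^ N)) atTop (nhds 1) := by
    intro l j
    rw [tendsto_iff_norm_sub_tendsto_zero]
    refine squeeze_zero (fun N => norm_nonneg _) (fun N => ?_)
      (tendsto_inv_pow_mul (p := p) ‖1 - q‖)
    have hBN : ‖1 - (qpow q ((l : ℤ_[p]) * a j)) ^ p ^ N‖ ≤ ((p : ℝ)⁻¹) ^ N * ‖1 - q‖ :=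
      one_sub_qpow_pow_norm_le hpK h1 h2 _ N
    have huPnorm : (1 : ℝ) ≤ ‖1 - u ^ p ^ N‖ :=
      hu _ (Nat.one_le_pow _ _ (Fact.out : p.Prime).pos)
    have hpos : (0 : ℝ) < ‖1 - u ^ p ^ N‖ := lt_of_lt_of_le one_pos huPnorm
    have huP : ‖u ^ p ^ N‖ ≤ ‖1 - u ^ p ^ N‖ := by
      have hrepr : u ^ p ^ N = 1 + -(1 - u ^ p ^ N) := by ring
      calc ‖u ^ p ^ N‖ ≤ max ‖(1 : K)‖ ‖-(1 - u ^ p ^ N)‖ := by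
            nth_rewrite 1 [hrepr]
            exact IsUltrametricDist.norm_add_le_max _ _
        _ = ‖1 - u ^ p ^ N‖ := by
            rw [norm_one, norm_neg]
            exact max_eq_right huPnorm
    have heq : (1 - (qpow q ((l : ℤ_[p]) * a j) * u) ^ p ^ N) / (1 - u ^ p ^ N) - 1
        = u ^ p ^ N * (1 - (qpow q ((l : ℤ_[p]) * a j)) ^ p ^ N) / (1 - u ^ p ^ N) := by
      rw [div_sub_one (huN N)]
      congr 1
      rw [mul_pow]
      ring
    rw [heq, norm_div, norm_mul, div_le_iff₀ hpos]
    calc ‖u ^ p ^ N‖ * ‖1 - (qpow q ((l : ℤ_[p]) * a j)) ^ p ^ N‖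
        ≤ ‖1 - u ^ p ^ N‖ * (((p : ℝ)⁻¹) ^ N * ‖1 - q‖) :=
          mul_le_mul huP hBN (norm_nonneg _) (norm_nonneg _)
      _ = ((p : ℝ)⁻¹) ^ N * ‖1 - q‖ * ‖1 - u ^ p ^ N‖ := by ring
  -- put everything together
  refine Tendsto.congr (fun N => (key N).symm) ?_
  have hval : qEulerBarnes r n w u q a
      = ((1 - q)⁻¹) ^ n * ∑ l ∈ Finset.range (n + 1),
          (n.choose l : K) * (-1) ^ l * qpow q ((l : ℤ_[p]) * w) *
            ∏ j, ((1 - u) * 1 * (1 - qpow q ((l : ℤ_[p]) * a j) * u)⁻¹) := by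
    have hprod : ∀ l : ℕ, ∏ j, ((1 - u) * 1 * (1 - qpow q ((l : ℤ_[p]) * a j) * u)⁻¹)
        = (1 - u) ^ r * ∏ j, (1 - qpow q ((l : ℤ_[p]) * a j) * u)⁻¹ := by
      intro l
      rw [Finset.prod_mul_distrib, Finset.prod_mul_distrib, Finset.prod_const,
        Finset.prod_const, Finset.card_univ, Fintype.card_fin, one_pow, mul_one]
    simp only [qEulerBarnes]
    rw [Finset.mul_sum, Finset.mul_sum]
    refine Finset.sum_congr rfl fun l _ => ?_
    rw [hprod l]
    ring
  rw [hval]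
  refine Tendsto.const_mul _ (tendsto_finset_sum _ fun l _ => ?_)
  refine Tendsto.const_mul _ (tendsto_finset_prod _ fun j _ => ?_)
  exact (tendsto_const_nhds.mul (hR l j)).mul tendsto_const_nhds
end

section
/- In the formal power series ring ℂ_p[[t]] one has the identity Σ_{k=0}^∞ H_k^{(r)}(u,q|a_1,…,a_r) · t^k/k! = (1−u)^r · exp(t/(1−q)) · Σ_{j=0}^∞ ( Π_{l=1}^r (1−q^{j·a_l}u)^{−1} ) · (−1)^j (1−q)^{−j} · t^j/j!, where exp(ct) := Σ_{m=0}^∞ c^m t^m/m!. (The factor (−1)^j makes precise the generating-function identity of Theorem 2, whose printed statement omits this sign.) -/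
open Filter Finset

/-- The formal exponential `e^{ct} = ∑_m c^m t^m / m!` as a formal power series. -/
noncomputable def expPS {K : Type*} [Field K] (c : K) : PowerSeries K :=
  PowerSeries.mk fun m => c ^ m / (m.factorial : K)

lemma appr_zero' {p : ℕ} [Fact p.Prime] (N : ℕ) : (0 : ℤ_[p]).appr N = 0 := by
  induction N with
  | zero => rfl
  | succ n ih => simp [PadicInt.appr, ih]

lemma qpow_zero' {p : ℕ} [Fact p.Prime] {K : Type*} [NormedField K] (q : K) :
    qpow q (0 : ℤ_[p]) = 1 := by
  have h : (fun N : ℕ => q ^ ((0 : ℤ_[p]).appr N)) = fun _ : ℕ => 1 := by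
    funext N; simp [appr_zero']
  rw [qpow, h]
  exact Filter.Tendsto.limUnder_eq tendsto_const_nhds

lemma charZero_of_norm_p {p : ℕ} [hp : Fact p.Prime] {K : Type*} [NormedField K]
    (hpK : ‖(p : K)‖ = (p : ℝ)⁻¹) : CharZero K := by
  obtain ⟨ℓ, hℓ⟩ := CharP.exists K
  rcases CharP.char_is_prime_or_zero K ℓ with hprime | h0
  · exfalso
    haveI : Fact ℓ.Prime := ⟨hprime⟩
    have hp2 : 2 ≤ p := hp.out.two_le
    have hppos : (0:ℝ) < (p:ℝ)⁻¹ := by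
      rw [inv_pos]; exact_mod_cast lt_of_lt_of_le two_pos hp2
    have hpne : (p : K) ≠ 0 := by
      intro h; rw [h, norm_zero] at hpK; exact absurd hpK.symm (ne_of_gt hppos)
    have hnd : ¬ (ℓ ∣ p) := by
      intro hdvd
      have : ℓ = p := (Nat.prime_dvd_prime_iff_eq hprime hp.out).mp hdvd
      subst this
      exact hpne (CharP.cast_eq_zero K ℓ)
    have hz : (p : ZMod ℓ) ≠ 0 := by
      rw [Ne, ZMod.natCast_eq_zero_iff]; exact hnd
    have h1 : (p : ZMod ℓ) ^ (ℓ - 1) = 1 := ZMod.pow_card_sub_one_eq_one hz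
    have h2 : (p : K) ^ (ℓ - 1) = 1 := by
      have := congrArg (ZMod.castHom dvd_rfl K) h1
      simpa using this
    have h3 : ((p:ℝ)⁻¹) ^ (ℓ - 1) = 1 := by
      rw [← hpK, ← norm_pow, h2, norm_one]
    have hlt : ((p:ℝ)⁻¹) ^ (ℓ - 1) < 1 := by
      apply pow_lt_one₀ (le_of_lt hppos)
      · rw [inv_lt_one_iff₀]; right; exact_mod_cast lt_of_lt_of_le one_lt_two hp2
      · have := hprime.two_le; omega
    rw [h3] at hlt; exact lt_irrefl 1 hlt
  · subst h0; exact CharP.charP_to_charZero K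

lemma coeff_key {p : ℕ} [Fact p.Prime] {K : Type*} [NormedField K] [CharZero K]
    (r : ℕ) (a : Fin r → ℤ_[p]) (u q : K) (n : ℕ) :
    ((1 - u) ^ r * ((1 - q)⁻¹) ^ n *
      ∑ l ∈ Finset.range (n + 1),
        (n.choose l : K) * (-1) ^ l * qpow q ((l : ℤ_[p]) * (0:ℤ_[p])) *
          ∏ j, (1 - qpow q ((l : ℤ_[p]) * a j) * u)⁻¹) / (n.factorial : K)
    = (1 - u) ^ r * ∑ k ∈ Finset.range (n + 1),
        (((1-q)⁻¹) ^ k / (k.factorial : K)) *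
          ((∏ l, (1 - qpow q (((n-k : ℕ) : ℤ_[p]) * a l) * u)⁻¹) * (-1) ^ (n-k) *
            ((1 - q)⁻¹) ^ (n-k) / ((n-k).factorial : K)) := by
  rw [← Finset.sum_range_reflect]
  rw [Finset.mul_sum, Finset.sum_div, Finset.mul_sum]
  refine Finset.sum_congr rfl fun i hi => ?_
  rw [Finset.mem_range, Nat.lt_succ_iff] at hi
  have h1 : n + 1 - 1 - i = n - i := by omega
  set l := n - i with hldef
  have hl : l ≤ n := Nat.sub_le n i
  have hil : n - l = i := by omega
  simp only [h1, mul_zero, qpow_zero', mul_one]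
  have hcl : ((n.choose l : ℕ) : K) = (n.factorial : K) / ((l.factorial : K) * ((n-l).factorial : K)) :=
    Nat.cast_choose K hl
  rw [hil] at hcl
  have hf : (n.factorial : K) ≠ 0 := Nat.cast_ne_zero.mpr (Nat.factorial_ne_zero n)
  have hfl : (l.factorial : K) ≠ 0 := Nat.cast_ne_zero.mpr (Nat.factorial_ne_zero l)
  have hfnl : (i.factorial : K) ≠ 0 := Nat.cast_ne_zero.mpr (Nat.factorial_ne_zero i)
  have hpow : ((1-q)⁻¹) ^ i * ((1-q)⁻¹) ^ l = ((1-q)⁻¹) ^ n := by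
    rw [← pow_add]; congr 1; omega
  have key : ((1-q)⁻¹)^n * (n.choose l : K) / (n.factorial : K)
      = ((1-q)⁻¹)^i / (i.factorial:K) * (((1-q)⁻¹)^l / (l.factorial:K)) := by
    rw [hcl, ← hpow]
    field_simp
  linear_combination ((1-u)^r * (-1)^l * (∏ j, (1 - qpow q ((l:ℤ_[p]) * a j) * u)⁻¹)) * key

/-- In `ℂ_p⟦t⟧` one has
`∑_k H_k^{(r)}(u,q|a⃗) t^k/k!
  = (1-u)^r · exp(t/(1-q)) · ∑_j (∏_l (1-q^{j a_l}u)⁻¹) (-1)^j (1-q)^{-j} t^j/j!`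
(the generating-function identity of Theorem 2, with the sign `(-1)^j` made explicit). -/
theorem qEulerBarnes_generating_function
    {p : ℕ} [Fact p.Prime] {K : Type*} [NormedField K] [CompleteSpace K]
    [IsUltrametricDist K] (hpK : ‖(p : K)‖ = (p : ℝ)⁻¹)
    (r : ℕ) (hr : 1 ≤ r) (a : Fin r → ℤ_[p]) (ha : ∀ j, a j ≠ 0)
    (u q : K) (hu : ∀ f : ℕ, 1 ≤ f → 1 ≤ ‖1 - u ^ f‖)
    (hq0 : 0 < ‖1 - q‖) (hq1 : ‖1 - q‖ < (p : ℝ) ^ (-(1 : ℝ) / ((p : ℝ) - 1))) :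
    (PowerSeries.mk fun k => qEulerBarnes r k 0 u q a / (k.factorial : K)) =
      PowerSeries.C ((1 - u) ^ r) * expPS ((1 - q)⁻¹) *
        PowerSeries.mk fun j =>
          (∏ l, (1 - qpow q ((j : ℤ_[p]) * a l) * u)⁻¹) * (-1) ^ j * ((1 - q)⁻¹) ^ j /
            (j.factorial : K) := by
  haveI : CharZero K := charZero_of_norm_p hpK
  ext n
  rw [mul_assoc, PowerSeries.coeff_mk, PowerSeries.coeff_C_mul, PowerSeries.coeff_mul,
    Finset.Nat.sum_antidiagonal_eq_sum_range_succ_mk]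
  simp only [expPS, PowerSeries.coeff_mk, qEulerBarnes]
  exact coeff_key r a u q n
end

section
/- For all integers f ≥ 1, N ≥ 0, i ≥ 0 and every integer x with 0 ≤ x < f·p^N: |u^x · (1−u^{f·p^N})^{−1} · H_i^{(1)}(u^{f·p^N}, q^{f·p^N} | a_1)|_p ≤ 1, where H_i^{(1)}(U, Q | a_1) := (1−U)(1−Q)^{−i} Σ_{l=0}^i binom(i,l)(−1)^l (1−Q^{l·a_1}U)^{−1} with U = u^{f·p^N} and Q = q^{f·p^N}. -/
open Filter Finset Topology

section Helpers
set_option linter.unusedSectionVars false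
set_option maxHeartbeats 1000000
section Ultra
variable {K : Type*} [NormedField K] [IsUltrametricDist K]

lemma my_norm_add_eq_left {a b : K} (h : ‖b‖ < ‖a‖) : ‖a + b‖ = ‖a‖ := by
  rw [IsUltrametricDist.norm_add_eq_max_of_norm_ne_norm h.ne', max_eq_left h.le]

lemma my_norm_sub_eq_left {a b : K} (h : ‖b‖ < ‖a‖) : ‖a - b‖ = ‖a‖ := by
  rw [sub_eq_add_neg]
  exact my_norm_add_eq_left (by simpa using h)

lemma my_norm_geom_le {r : K} (hr : ‖r‖ ≤ 1) (n : ℕ) : ‖∑ t ∈ range n, r ^ t‖ ≤ 1 := by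
  apply IsUltrametricDist.norm_sum_le_of_forall_le_of_nonneg zero_le_one
  intro i _
  simpa using pow_le_one₀ (norm_nonneg r) hr

lemma my_norm_one_sub_pow_le {Q : K} (hQ : ‖Q‖ ≤ 1) (n : ℕ) : ‖1 - Q ^ n‖ ≤ ‖1 - Q‖ := by
  have h : 1 - Q ^ n = (∑ t ∈ range n, Q ^ t) * (1 - Q) := by
    have := geom_sum_mul Q n
    linear_combination this
  rw [h, norm_mul]
  exact mul_le_of_le_one_left (norm_nonneg _) (my_norm_geom_le hQ n)

lemma my_norm_natCast_le_one (n : ℕ) : ‖(n : K)‖ ≤ 1 :=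
  IsUltrametricDist.norm_natCast_le_one K n

end Ultra

section P
variable {p : ℕ} [hp : Fact p.Prime] {K : Type*} [NormedField K] [IsUltrametricDist K]

noncomputable def rho (p : ℕ) : ℝ := (p : ℝ) ^ (-(1 : ℝ) / ((p : ℝ) - 1))

lemma one_lt_pR : (1 : ℝ) < (p : ℝ) := by exact_mod_cast hp.out.one_lt

lemma rho_lt_one : rho p < 1 := by
  apply Real.rpow_lt_one_of_one_lt_of_neg (one_lt_pR (p := p))
  have : (1 : ℝ) < (p : ℝ) := one_lt_pR
  rw [div_neg_iff]
  right
  constructor <;> linarith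

lemma rho_pos : 0 < rho p := Real.rpow_pos_of_pos (by have := one_lt_pR (p:=p); linarith) _

lemma rho_pow_eq : (rho p) ^ (p - 1) = (p : ℝ)⁻¹ := by
  have h1 : (1:ℝ) < p := one_lt_pR
  rw [rho, ← Real.rpow_natCast, ← Real.rpow_mul (by linarith)]
  have : ((p - 1 : ℕ) : ℝ) = (p : ℝ) - 1 := by
    have := hp.out.one_lt
    push_cast [Nat.cast_sub this.le]
    ring
  rw [this]
  have hne : (p : ℝ) - 1 ≠ 0 := by linarith
  rw [div_mul_cancel₀ _ hne, Real.rpow_neg_one]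

end P

section P2
variable {p : ℕ} [hp : Fact p.Prime] {K : Type*} [NormedField K] [IsUltrametricDist K]

lemma norm_eq_one_of_close {Q : K} (h : ‖1 - Q‖ < 1) : ‖Q‖ = 1 := by
  have h2 := my_norm_sub_eq_left (a := (1 : K)) (b := 1 - Q) (by simpa using h)
  simpa using h2

lemma norm_one_sub_pow_p (hpK : ‖(p : K)‖ = (p : ℝ)⁻¹) {Q : K} (hQ : ‖1 - Q‖ < rho p) :
    ‖1 - Q ^ p‖ ≤ (p : ℝ)⁻¹ * ‖1 - Q‖ := by
  have hprime := hp.out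
  set t := Q - 1 with ht
  have htQ : ‖1 - Q‖ = ‖t‖ := by rw [ht, ← norm_neg]; congr 1; ring
  rw [htQ] at hQ ⊢
  have ht1 : ‖t‖ < 1 := hQ.trans_le rho_lt_one.le
  have hexp : Q ^ p - 1 = ∑ k ∈ range p, t ^ (k + 1) * (p.choose (k + 1) : K) := by
    have hQt : Q = t + 1 := by rw [ht]; ring
    rw [hQt, add_pow, Finset.sum_range_succ']
    simp
  rw [← norm_neg]
  have : -(1 - Q ^ p) = Q ^ p - 1 := by ring
  rw [this, hexp]
  apply IsUltrametricDist.norm_sum_le_of_forall_le_of_nonneg (by positivity)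
  intro k hk
  rw [mem_range] at hk
  rw [norm_mul, norm_pow]
  rcases eq_or_lt_of_le (Nat.succ_le_of_lt hk) with heq | hlt
  · -- k+1 = p
    rw [show k + 1 = p from heq, Nat.choose_self]
    have h1 : ‖t‖ ^ p = ‖t‖ ^ (p - 1) * ‖t‖ := by
      rw [← pow_succ]
      congr 1
      omega
    have h2 : ‖t‖ ^ (p - 1) ≤ (p : ℝ)⁻¹ := by
      calc ‖t‖ ^ (p - 1) ≤ (rho p) ^ (p - 1) := by
            apply pow_le_pow_left₀ (norm_nonneg _) hQ.le
        _ = (p : ℝ)⁻¹ := rho_pow_eq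
    simp only [Nat.cast_one, norm_one, mul_one, h1]
    exact mul_le_mul_of_nonneg_right h2 (norm_nonneg _)
  · -- k+1 < p
    obtain ⟨c, hc⟩ := hprime.dvd_choose_self (Nat.succ_ne_zero k) hlt
    have hnc : ‖(p.choose (k + 1) : K)‖ ≤ (p : ℝ)⁻¹ := by
      rw [hc]
      push_cast
      rw [norm_mul, hpK]
      calc (p : ℝ)⁻¹ * ‖(c : K)‖ ≤ (p : ℝ)⁻¹ * 1 := by
            apply mul_le_mul_of_nonneg_left (my_norm_natCast_le_one c) (by positivity)
        _ = (p : ℝ)⁻¹ := mul_one _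
    have hnt : ‖t‖ ^ (k + 1) ≤ ‖t‖ := by
      calc ‖t‖ ^ (k + 1) ≤ ‖t‖ ^ 1 := by
            apply pow_le_pow_of_le_one (norm_nonneg _) ht1.le
            omega
        _ = ‖t‖ := pow_one _
    calc ‖t‖ ^ (k + 1) * ‖(p.choose (k + 1) : K)‖ ≤ ‖t‖ * (p : ℝ)⁻¹ := by
          apply mul_le_mul hnt hnc (norm_nonneg _) (norm_nonneg _)
      _ = (p : ℝ)⁻¹ * ‖t‖ := mul_comm _ _

lemma norm_one_sub_pow_p_pow (hpK : ‖(p : K)‖ = (p : ℝ)⁻¹) {Q : K} (hQ : ‖1 - Q‖ < rho p)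
    (n : ℕ) :
    ‖1 - Q ^ p ^ n‖ ≤ ((p : ℝ)⁻¹) ^ n * ‖1 - Q‖ ∧ ‖1 - Q ^ p ^ n‖ < rho p := by
  have hp1 : (1 : ℝ) < p := one_lt_pR
  induction n with
  | zero => simpa using hQ
  | succ n ih =>
    have h2 : Q ^ p ^ (n + 1) = (Q ^ p ^ n) ^ p := by rw [← pow_mul, pow_succ]
    have h3 := norm_one_sub_pow_p hpK ih.2
    have hple : (p : ℝ)⁻¹ * ‖1 - Q ^ p ^ n‖ ≤ ‖1 - Q ^ p ^ n‖ := by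
      have : (p : ℝ)⁻¹ ≤ 1 := by
        rw [inv_le_one_iff₀]; right; linarith
      nlinarith [norm_nonneg (1 - Q ^ p ^ n)]
    rw [h2]
    constructor
    · calc ‖1 - (Q ^ p ^ n) ^ p‖ ≤ (p : ℝ)⁻¹ * ‖1 - Q ^ p ^ n‖ := h3
        _ ≤ (p : ℝ)⁻¹ * (((p : ℝ)⁻¹) ^ n * ‖1 - Q‖) := by
            apply mul_le_mul_of_nonneg_left ih.1 (by positivity)
        _ = ((p : ℝ)⁻¹) ^ (n + 1) * ‖1 - Q‖ := by ring
    · exact (h3.trans hple).trans_lt ih.2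

end P2

section P3
variable {p : ℕ} [hp : Fact p.Prime] {K : Type*} [NormedField K] [IsUltrametricDist K]

lemma norm_pow_sub_pow_le {Q : K} (hQn : ‖Q‖ = 1) {M m n : ℕ} (hmn : m ≤ n) (hdvd : M ∣ n - m) :
    ‖Q ^ n - Q ^ m‖ ≤ ‖1 - Q ^ M‖ := by
  obtain ⟨k, hk⟩ := hdvd
  have hn : n = m + M * k := by omega
  subst hn
  rw [pow_add, pow_mul]
  have h1 : Q ^ m * (Q ^ M) ^ k - Q ^ m = Q ^ m * ((Q ^ M) ^ k - 1) := by ring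
  rw [h1, norm_mul, norm_pow, hQn, one_pow, one_mul, ← norm_neg]
  have h2 : -((Q ^ M) ^ k - 1) = 1 - (Q ^ M) ^ k := by ring
  rw [h2]
  exact my_norm_one_sub_pow_le (by rw [norm_pow, hQn, one_pow]) k

lemma norm_pow_sub_pow_le' {Q : K} (hQn : ‖Q‖ = 1) {M m n : ℕ} (h : m ≡ n [MOD M]) :
    ‖Q ^ n - Q ^ m‖ ≤ ‖1 - Q ^ M‖ := by
  rcases le_total m n with hmn | hmn
  · exact norm_pow_sub_pow_le hQn hmn ((Nat.modEq_iff_dvd' hmn).mp h)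
  · rw [← norm_neg, neg_sub]
    exact norm_pow_sub_pow_le hQn hmn ((Nat.modEq_iff_dvd' hmn).mp h.symm)

lemma tendsto_pinv_pow_mul (C : ℝ) :
    Tendsto (fun N : ℕ => ((p : ℝ)⁻¹) ^ N * C) atTop (𝓝 0) := by
  have hp1 : (1 : ℝ) < p := one_lt_pR
  have h := tendsto_pow_atTop_nhds_zero_of_lt_one (r := (p : ℝ)⁻¹) (by positivity)
    (by rw [inv_lt_one_iff₀]; right; exact hp1)
  simpa using h.mul_const C

variable [CompleteSpace K]

lemma qpow_tendsto (hpK : ‖(p : K)‖ = (p : ℝ)⁻¹) {Q : K} (hQ : ‖1 - Q‖ < rho p) (z : ℤ_[p]) :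
    Tendsto (fun N : ℕ => Q ^ z.appr N) atTop (𝓝 (qpow Q z)) := by
  have hQn : ‖Q‖ = 1 := norm_eq_one_of_close (hQ.trans_le rho_lt_one.le)
  have hc : CauchySeq (fun N : ℕ => Q ^ z.appr N) := by
    apply cauchySeq_of_le_tendsto_0 (fun N => ((p : ℝ)⁻¹) ^ N * ‖1 - Q‖) _ (tendsto_pinv_pow_mul _)
    intro a b N ha hb
    rw [dist_eq_norm]
    have m1 : z.appr N ≡ z.appr a [MOD p ^ N] :=
      (Nat.modEq_iff_dvd' (z.appr_mono ha)).mpr (PadicInt.dvd_appr_sub_appr z N a ha)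
    have m2 : z.appr N ≡ z.appr b [MOD p ^ N] :=
      (Nat.modEq_iff_dvd' (z.appr_mono hb)).mpr (PadicInt.dvd_appr_sub_appr z N b hb)
    calc ‖Q ^ z.appr a - Q ^ z.appr b‖ ≤ ‖1 - Q ^ p ^ N‖ :=
          norm_pow_sub_pow_le' hQn (m2.symm.trans m1)
      _ ≤ ((p : ℝ)⁻¹) ^ N * ‖1 - Q‖ := (norm_one_sub_pow_p_pow hpK hQ N).1
  obtain ⟨L, hL⟩ := cauchySeq_tendsto_of_complete hc
  have heq : qpow Q z = L := hL.limUnder_eq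
  rw [heq]
  exact hL

lemma qpow_norm_eq_one (hpK : ‖(p : K)‖ = (p : ℝ)⁻¹) {Q : K} (hQ : ‖1 - Q‖ < rho p) (z : ℤ_[p]) :
    ‖qpow Q z‖ = 1 := by
  have hQn : ‖Q‖ = 1 := norm_eq_one_of_close (hQ.trans_le rho_lt_one.le)
  have h1 := (qpow_tendsto hpK hQ z).norm
  have h2 : Tendsto (fun N : ℕ => ‖Q ^ z.appr N‖) atTop (𝓝 1) := by
    simp only [norm_pow, hQn, one_pow]
    exact tendsto_const_nhds
  exact tendsto_nhds_unique h1 h2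

lemma qpow_one_sub_le (hpK : ‖(p : K)‖ = (p : ℝ)⁻¹) {Q : K} (hQ : ‖1 - Q‖ < rho p) (z : ℤ_[p]) :
    ‖1 - qpow Q z‖ ≤ ‖1 - Q‖ := by
  have hQn : ‖Q‖ = 1 := norm_eq_one_of_close (hQ.trans_le rho_lt_one.le)
  have h1 : Tendsto (fun N : ℕ => ‖1 - Q ^ z.appr N‖) atTop (𝓝 ‖1 - qpow Q z‖) :=
    (tendsto_const_nhds.sub (qpow_tendsto hpK hQ z)).norm
  exact le_of_tendsto h1 (Eventually.of_forall fun N => my_norm_one_sub_pow_le (le_of_eq hQn) _)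


lemma appr_sub_norm_le (z : ℤ_[p]) (N : ℕ) :
    ‖(z.appr N : ℤ_[p]) - z‖ ≤ (p : ℝ) ^ (-N : ℤ) := by
  rw [← norm_neg, neg_sub]
  exact (PadicInt.norm_le_pow_iff_mem_span_pow _ N).mpr (z.appr_spec N)

lemma qpow_natCast_mul (hpK : ‖(p : K)‖ = (p : ℝ)⁻¹) {Q : K} (hQ : ‖1 - Q‖ < rho p) (l : ℕ)
    (z : ℤ_[p]) : qpow Q ((l : ℤ_[p]) * z) = (qpow Q z) ^ l := by
  have hQn : ‖Q‖ = 1 := norm_eq_one_of_close (hQ.trans_le rho_lt_one.le)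
  have h1 : Tendsto (fun N : ℕ => Q ^ (l * z.appr N)) atTop (𝓝 ((qpow Q z) ^ l)) := by
    have h := (qpow_tendsto hpK hQ z).pow l
    have heq : (fun N : ℕ => (Q ^ z.appr N) ^ l) = fun N : ℕ => Q ^ (l * z.appr N) := by
      funext N; rw [← pow_mul, mul_comm]
    rwa [heq] at h
  have h2 := qpow_tendsto hpK hQ ((l : ℤ_[p]) * z)
  -- modular comparison of exponents
  have key : ∀ N : ℕ, ((l : ℤ_[p]) * z).appr N ≡ l * z.appr N [MOD p ^ N] := by
    intro N
    rw [Nat.modEq_iff_dvd]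
    have hb : ‖((l * z.appr N : ℕ) : ℤ_[p]) - (l : ℤ_[p]) * z‖ ≤ (p : ℝ) ^ (-N : ℤ) := by
      have heq : ((l * z.appr N : ℕ) : ℤ_[p]) - (l : ℤ_[p]) * z
          = (l : ℤ_[p]) * ((z.appr N : ℤ_[p]) - z) := by push_cast; ring
      rw [heq, norm_mul]
      calc ‖(l : ℤ_[p])‖ * ‖(z.appr N : ℤ_[p]) - z‖ ≤ 1 * ((p : ℝ) ^ (-N : ℤ)) := by
            apply mul_le_mul (PadicInt.norm_le_one _) (appr_sub_norm_le z N) (norm_nonneg _)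
              zero_le_one
        _ = (p : ℝ) ^ (-N : ℤ) := one_mul _
    have ha : ‖((((l : ℤ_[p]) * z).appr N : ℕ) : ℤ_[p]) - (l : ℤ_[p]) * z‖ ≤ (p : ℝ) ^ (-N : ℤ) :=
      appr_sub_norm_le _ N
    set n1 : ℤ := ((l * z.appr N : ℕ) : ℤ) with hn1
    set n2 : ℤ := ((((l : ℤ_[p]) * z).appr N : ℕ) : ℤ) with hn2
    have hd : ‖((n1 - n2 : ℤ) : ℤ_[p])‖ ≤ (p : ℝ) ^ (-N : ℤ) := by
      have heq : ((n1 - n2 : ℤ) : ℤ_[p])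
          = (((l * z.appr N : ℕ) : ℤ_[p]) - (l : ℤ_[p]) * z)
            + -(((((l : ℤ_[p]) * z).appr N : ℕ) : ℤ_[p]) - (l : ℤ_[p]) * z) := by
        rw [hn1, hn2]; push_cast; ring
      rw [heq]
      refine le_trans (PadicInt.nonarchimedean _ _) (max_le hb (by rwa [norm_neg]))
    rw [PadicInt.norm_int_le_pow_iff_dvd] at hd
    exact_mod_cast hd
  have key2 : Tendsto
      (fun N : ℕ => Q ^ (((l : ℤ_[p]) * z).appr N) - Q ^ (l * z.appr N)) atTop (𝓝 0) := by
    apply squeeze_zero_norm _ (tendsto_pinv_pow_mul (p := p) ‖1 - Q‖)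
    intro N
    calc ‖Q ^ (((l : ℤ_[p]) * z).appr N) - Q ^ (l * z.appr N)‖
        = ‖Q ^ (l * z.appr N) - Q ^ (((l : ℤ_[p]) * z).appr N)‖ := norm_sub_rev _ _
      _ ≤ ‖1 - Q ^ p ^ N‖ := norm_pow_sub_pow_le' hQn (key N)
      _ ≤ ((p : ℝ)⁻¹) ^ N * ‖1 - Q‖ := (norm_one_sub_pow_p_pow hpK hQ N).1
  have h3 : Tendsto (fun N : ℕ => Q ^ (l * z.appr N)) atTop (𝓝 (qpow Q ((l : ℤ_[p]) * z))) := by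
    have := h2.sub key2
    simpa using this
  exact tendsto_nhds_unique h3 h1

end P3

section Core
variable {K : Type*} [NormedField K] [IsUltrametricDist K]

lemma pascal_sum (g : ℕ → K) (n k : ℕ) :
    ∑ l ∈ range (n + 2), (((n + 1).choose l : ℕ) : K) * (-1) ^ l * g (k + l)
      = ∑ l ∈ range (n + 1), ((n.choose l : ℕ) : K) * (-1) ^ l * g (k + l)
        - ∑ l ∈ range (n + 1), ((n.choose l : ℕ) : K) * (-1) ^ l * g (k + 1 + l) := by
  rw [Finset.sum_range_succ' (fun l => (((n + 1).choose l : ℕ) : K) * (-1) ^ l * g (k + l)) (n + 1)]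
  have h1 : ∀ l, (((n + 1).choose (l + 1) : ℕ) : K) * (-1) ^ (l + 1) * g (k + (l + 1))
      = -(((n.choose l : ℕ) : K) * (-1) ^ l * g (k + 1 + l))
        + ((n.choose (l + 1) : ℕ) : K) * (-1) ^ (l + 1) * g (k + (l + 1)) := by
    intro l
    rw [Nat.choose_succ_succ, show k + 1 + l = k + (l + 1) by omega]
    push_cast
    ring
  rw [Finset.sum_congr rfl (fun l _ => h1 l), Finset.sum_add_distrib]
  have h2 : ∑ l ∈ range (n + 1), -(((n.choose l : ℕ) : K) * (-1) ^ l * g (k + 1 + l))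
      = -∑ l ∈ range (n + 1), ((n.choose l : ℕ) : K) * (-1) ^ l * g (k + 1 + l) :=
    Finset.sum_neg_distrib _
  have h3 : ∑ l ∈ range (n + 1), ((n.choose (l + 1) : ℕ) : K) * (-1) ^ (l + 1) * g (k + (l + 1))
      = ∑ l ∈ range n, ((n.choose (l + 1) : ℕ) : K) * (-1) ^ (l + 1) * g (k + (l + 1)) := by
    rw [Finset.sum_range_succ]
    simp
  have h4 : ∑ l ∈ range (n + 1), ((n.choose l : ℕ) : K) * (-1) ^ l * g (k + l)
      = ∑ l ∈ range n, ((n.choose (l + 1) : ℕ) : K) * (-1) ^ (l + 1) * g (k + (l + 1))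
        + ((n.choose 0 : ℕ) : K) * (-1) ^ 0 * g (k + 0) :=
    Finset.sum_range_succ' _ n
  rw [h2, h3]
  rw [h4]
  simp
  ring
end Core

section Core2
set_option linter.unusedSectionVars false
variable {K : Type*} [NormedField K] [IsUltrametricDist K]

lemma my_norm_sub_le_max (x y : K) : ‖x - y‖ ≤ max ‖x‖ ‖y‖ := by
  rw [sub_eq_add_neg]
  simpa using IsUltrametricDist.norm_add_le_max x (-y)

lemma core_exists (r v : K) (hr : ‖r‖ ≤ 1) {M : ℝ} (hM : 1 ≤ M) (hv : ‖v‖ ≤ M)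
    (hne : ∀ m : ℕ, 1 - v * r ^ m ≠ 0) (n : ℕ) :
    ∃ a : ℕ → K, (∀ j, ‖a j‖ ≤ M ^ n) ∧ (∀ j, n < j → a j = 0) ∧
      ∀ k : ℕ,
        (∑ l ∈ range (n + 1), ((n.choose l : ℕ) : K) * (-1) ^ l * (1 - v * r ^ (k + l))⁻¹) *
            ∏ j ∈ range (n + 1), (1 - v * r ^ (k + j))
          = (1 - r) ^ n * ∑ j ∈ range (n + 1), a j * (r ^ k) ^ j := by
  induction n with
  | zero =>
    refine ⟨fun j => if j = 0 then 1 else 0, ?_, ?_, ?_⟩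
    · intro j
      by_cases h : j = 0 <;> simp [h]
    · intro j hj
      simp [Nat.pos_iff_ne_zero.mp hj]
    · intro k
      simp [inv_mul_cancel₀ (hne k)]
  | succ n ih =>
    obtain ⟨a, ha_norm, ha_zero, ha_eq⟩ := ih
    set σ : ℕ → K := fun j => ∑ t ∈ range j, r ^ t with hσdef
    set τ : K := ∑ t ∈ range (n + 1), r ^ t with hτdef
    set b : ℕ → K := fun j => a j * σ j with hbdef
    set a' : ℕ → K := fun j => match j with
      | 0 => b 0
      | j + 1 => b (j + 1) - v * b j + v * τ * a j with ha'def
    have hσ : ∀ j, (1 - r) * σ j = 1 - r ^ j := by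
      intro j
      have := geom_sum_mul r j
      simp only [hσdef]
      linear_combination -this
    have hτ : (1 - r) * τ = 1 - r ^ (n + 1) := hσ (n + 1)
    have hσn : ∀ j, ‖σ j‖ ≤ 1 := fun j => my_norm_geom_le hr j
    have hτn : ‖τ‖ ≤ 1 := my_norm_geom_le hr (n + 1)
    have hb_norm : ∀ j, ‖b j‖ ≤ M ^ n := by
      intro j
      calc ‖a j * σ j‖ = ‖a j‖ * ‖σ j‖ := norm_mul _ _
        _ ≤ M ^ n * 1 := mul_le_mul (ha_norm j) (hσn j) (norm_nonneg _)
            (le_trans (norm_nonneg _) (ha_norm 0))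
        _ = M ^ n := mul_one _
    have hMn : (0:ℝ) ≤ M ^ n := by positivity
    have hMle : M ^ n ≤ M ^ (n + 1) := pow_le_pow_right₀ hM (Nat.le_succ n)
    have ha'_norm : ∀ j, ‖a' j‖ ≤ M ^ (n + 1) := by
      intro j
      match j with
      | 0 => exact le_trans (hb_norm 0) hMle
      | j + 1 =>
        show ‖b (j + 1) - v * b j + v * τ * a j‖ ≤ M ^ (n + 1)
        refine le_trans (IsUltrametricDist.norm_add_le_max _ _) (max_le ?_ ?_)
        · refine le_trans (my_norm_sub_le_max _ _) (max_le ?_ ?_)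
          · exact le_trans (hb_norm (j + 1)) hMle
          · rw [norm_mul, pow_succ, mul_comm (M ^ n) M]
            exact mul_le_mul hv (hb_norm j) (norm_nonneg _) (le_trans (norm_nonneg _) hv)
        · rw [norm_mul, norm_mul, pow_succ, mul_comm (M ^ n) M]
          have h5 : ‖v‖ * ‖τ‖ ≤ M := by nlinarith [norm_nonneg v, norm_nonneg τ]
          exact mul_le_mul h5 (ha_norm j) (norm_nonneg _) (by linarith : (0:ℝ) ≤ M)
    have hb_zero : ∀ j, n < j → b j = 0 := by
      intro j hj
      simp only [hbdef, ha_zero j hj, zero_mul]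
    have ha'_zero : ∀ j, n + 1 < j → a' j = 0 := by
      intro j hj
      match j with
      | j + 1 =>
        show b (j + 1) - v * b j + v * τ * a j = 0
        rw [hb_zero (j + 1) (by omega), hb_zero j (by omega), ha_zero j (by omega)]
        ring
    refine ⟨a', ha'_norm, ha'_zero, ?_⟩
    intro k
    -- notation
    set s : K := r ^ k with hsdef
    -- Pascal step
    rw [pascal_sum (fun m => (1 - v * r ^ m)⁻¹) n k]
    -- product splits
    have hprod1 : ∏ j ∈ range (n + 1 + 1), (1 - v * r ^ (k + j))
        = (∏ j ∈ range (n + 1), (1 - v * r ^ (k + j))) * (1 - v * r ^ (k + (n + 1))) :=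
      Finset.prod_range_succ _ _
    have hprod2 : ∏ j ∈ range (n + 1 + 1), (1 - v * r ^ (k + j))
        = (∏ j ∈ range (n + 1), (1 - v * r ^ (k + 1 + j))) * (1 - v * r ^ (k + 0)) := by
      rw [Finset.prod_range_succ' (fun j => 1 - v * r ^ (k + j)) (n + 1)]
      congr 1
      exact Finset.prod_congr rfl fun j _ => by rw [show k + (j + 1) = k + 1 + j by omega]
    rw [sub_mul]
    nth_rewrite 1 [hprod1]
    rw [hprod2]
    rw [show (∑ l ∈ range (n + 1), ((n.choose l : ℕ) : K) * (-1) ^ l * (1 - v * r ^ (k + l))⁻¹) *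
          ((∏ j ∈ range (n + 1), (1 - v * r ^ (k + j))) * (1 - v * r ^ (k + (n + 1))))
        = ((∑ l ∈ range (n + 1), ((n.choose l : ℕ) : K) * (-1) ^ l * (1 - v * r ^ (k + l))⁻¹) *
          (∏ j ∈ range (n + 1), (1 - v * r ^ (k + j)))) * (1 - v * r ^ (k + (n + 1))) by ring]
    rw [show (∑ l ∈ range (n + 1), ((n.choose l : ℕ) : K) * (-1) ^ l * (1 - v * r ^ (k + 1 + l))⁻¹) *
          ((∏ j ∈ range (n + 1), (1 - v * r ^ (k + 1 + j))) * (1 - v * r ^ (k + 0)))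
        = ((∑ l ∈ range (n + 1), ((n.choose l : ℕ) : K) * (-1) ^ l * (1 - v * r ^ (k + 1 + l))⁻¹) *
          (∏ j ∈ range (n + 1), (1 - v * r ^ (k + 1 + j)))) * (1 - v * r ^ (k + 0)) by ring]
    rw [ha_eq k, ha_eq (k + 1)]
    -- now pure algebra with sums E k, E (k+1)
    have hE1 : ∑ j ∈ range (n + 1), a j * (r ^ (k + 1)) ^ j
        = ∑ j ∈ range (n + 1), a j * r ^ j * s ^ j := by
      refine Finset.sum_congr rfl fun j _ => ?_
      rw [hsdef, pow_succ, mul_comm (r ^ k) r, mul_pow]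
      ring
    rw [hE1]
    have hpow1 : r ^ (k + (n + 1)) = s * r ^ (n + 1) := by rw [hsdef, pow_add]
    have hpow0 : r ^ (k + 0) = s := by rw [hsdef, add_zero]
    rw [hpow1, hpow0]
    -- key algebraic identity
    have key : (∑ j ∈ range (n + 1), a j * s ^ j) * (1 - v * (s * r ^ (n + 1)))
          - (∑ j ∈ range (n + 1), a j * r ^ j * s ^ j) * (1 - v * s)
        = (1 - r) * ∑ j ∈ range (n + 1),
            (b j * s ^ j * (1 - v * s) + v * τ * (a j * s ^ j) * s) := by
      rw [Finset.sum_mul, Finset.sum_mul, Finset.mul_sum, ← Finset.sum_sub_distrib]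
      refine Finset.sum_congr rfl fun j _ => ?_
      have h1 := hσ j
      have h2 := hτ
      have hb_eval : b j = a j * σ j := rfl
      rw [hb_eval]
      linear_combination (-(a j * s ^ j * (1 - v * s))) * h1 + (-(v * a j * s ^ j * s)) * h2
    have hfin : ∑ j ∈ range (n + 1 + 1), a' j * s ^ j
        = ∑ j ∈ range (n + 1), (b j * s ^ j * (1 - v * s) + v * τ * (a j * s ^ j) * s) := by
      rw [Finset.sum_range_succ' (fun j => a' j * s ^ j) (n + 1)]
      have ha'0 : a' 0 = b 0 := rfl
      have ha'succ : ∀ j, a' (j + 1) = b (j + 1) - v * b j + v * τ * a j := fun j => rfl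
      have hexp : ∀ j, a' (j + 1) * s ^ (j + 1)
          = b (j + 1) * s ^ (j + 1) - v * (b j * s ^ j) * s + v * τ * (a j * s ^ j) * s := by
        intro j
        rw [ha'succ j, pow_succ]
        ring
      rw [Finset.sum_congr rfl fun j _ => hexp j]
      rw [Finset.sum_add_distrib, Finset.sum_sub_distrib]
      have hbtop : ∑ j ∈ range (n + 1), b (j + 1) * s ^ (j + 1) + a' 0 * s ^ 0
          = ∑ j ∈ range (n + 1), b j * s ^ j := by
        rw [ha'0]
        have : b 0 * s ^ 0 = (fun j => b j * s ^ j) 0 := rfl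
        rw [show (∑ j ∈ range (n + 1), b (j + 1) * s ^ (j + 1)) + b 0 * s ^ 0
            = ∑ j ∈ range (n + 1 + 1), b j * s ^ j from (Finset.sum_range_succ' (fun j => b j * s ^ j) (n + 1)).symm]
        rw [Finset.sum_range_succ]
        rw [hb_zero (n + 1) (by omega)]
        ring
      have hW : ∑ j ∈ range (n + 1), (b j * s ^ j * (1 - v * s) + v * τ * (a j * s ^ j) * s)
          = ∑ j ∈ range (n + 1), b j * s ^ j - ∑ j ∈ range (n + 1), v * (b j * s ^ j) * s
            + ∑ j ∈ range (n + 1), v * τ * (a j * s ^ j) * s := by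
        rw [Finset.sum_add_distrib]
        congr 1
        rw [← Finset.sum_sub_distrib]
        refine Finset.sum_congr rfl fun j _ => ?_
        ring
      linear_combination hbtop - hW
    rw [hfin]
    linear_combination ((1 - r) ^ n) * key

lemma core_sum_bound (r v : K) (hr : ‖r‖ ≤ 1) {M D : ℝ} (hM : 1 ≤ M) (hv : ‖v‖ ≤ M)
    (hD : 0 < D) (hden : ∀ m : ℕ, ‖1 - v * r ^ m‖ = D) (n : ℕ) :
    ‖∑ l ∈ range (n + 1), ((n.choose l : ℕ) : K) * (-1) ^ l * (1 - v * r ^ l)⁻¹‖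
      ≤ ‖1 - r‖ ^ n * M ^ n / D ^ (n + 1) := by
  have hne : ∀ m : ℕ, 1 - v * r ^ m ≠ 0 := by
    intro m h
    have := hden m
    rw [h, norm_zero] at this
    exact hD.ne this
  obtain ⟨a, ha_norm, _, ha_eq⟩ := core_exists r v hr hM hv hne n
  have h0 := ha_eq 0
  simp only [zero_add, pow_zero, one_pow, mul_one] at h0
  have hprod_norm : ‖∏ j ∈ range (n + 1), (1 - v * r ^ j)‖ = D ^ (n + 1) := by
    rw [norm_prod]
    calc ∏ j ∈ range (n + 1), ‖1 - v * r ^ j‖ = ∏ j ∈ range (n + 1), D :=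
          Finset.prod_congr rfl fun j _ => hden j
      _ = D ^ (n + 1) := by rw [Finset.prod_const, Finset.card_range]
  have hsum_norm : ‖∑ j ∈ range (n + 1), a j‖ ≤ M ^ n :=
    IsUltrametricDist.norm_sum_le_of_forall_le_of_nonneg (by positivity)
      (fun j _ => ha_norm j)
  have h1 : ‖∑ l ∈ range (n + 1), ((n.choose l : ℕ) : K) * (-1) ^ l * (1 - v * r ^ l)⁻¹‖
      * D ^ (n + 1) ≤ ‖1 - r‖ ^ n * M ^ n := by
    rw [← hprod_norm, ← norm_mul, h0, norm_mul, norm_pow]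
    exact mul_le_mul_of_nonneg_left hsum_norm (by positivity)
  rw [le_div_iff₀ (by positivity)]
  exact h1

lemma real_cancel (a d b c : ℝ) (hd : d ≠ 0) : a * d⁻¹ * (d * b * c) = a * b * c := by
  field_simp

end Core2

end Helpers

/-- For `f ≥ 1`, `N ≥ 0`, `i ≥ 0` and `0 ≤ x < f p^N`:
`‖u^x (1 - u^{f p^N})⁻¹ H_i^{(1)}(u^{f p^N}, q^{f p^N} | a_1)‖ ≤ 1`, where
`H_i^{(1)}(U, Q | a_1) = (1-U)(1-Q)^{-i} ∑_{l=0}^i C(i,l)(-1)^l (1 - Q^{l a_1} U)⁻¹`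
with `U = u^{f p^N}` and `Q = q^{f p^N}`. -/
theorem norm_H_one_term_le_one
    {p : ℕ} [Fact p.Prime] {K : Type*} [NormedField K] [CompleteSpace K]
    [IsUltrametricDist K] (hpK : ‖(p : K)‖ = (p : ℝ)⁻¹)
    (a1 : ℤ_[p]) (ha1 : a1 ≠ 0)
    (u q : K) (hu : ∀ f : ℕ, 1 ≤ f → 1 ≤ ‖1 - u ^ f‖)
    (hq0 : 0 < ‖1 - q‖) (hq1 : ‖1 - q‖ < (p : ℝ) ^ (-(1 : ℝ) / ((p : ℝ) - 1)))
    (f N i x : ℕ) (hf : 1 ≤ f) (hx : x < f * p ^ N) :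
    ‖u ^ x * (1 - u ^ (f * p ^ N))⁻¹ *
        ((1 - u ^ (f * p ^ N)) * ((1 - q ^ (f * p ^ N))⁻¹) ^ i *
          ∑ l ∈ Finset.range (i + 1),
            (i.choose l : K) * (-1) ^ l *
              (1 - qpow (q ^ (f * p ^ N)) ((l : ℤ_[p]) * a1) * u ^ (f * p ^ N))⁻¹)‖ ≤ 1 := by
  classical
  have hp1 : (1 : ℝ) < p := one_lt_pR
  set m : ℕ := f * p ^ N with hmdef
  have hm : 1 ≤ m := by
    have hpp : 0 < p ^ N := pow_pos (Fact.out : p.Prime).pos N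
    calc 1 = 1 * 1 := by norm_num
      _ ≤ f * p ^ N := Nat.mul_le_mul hf hpp
  have hq1' : ‖1 - q‖ < rho p := hq1
  have hqn : ‖q‖ = 1 := norm_eq_one_of_close (hq1'.trans_le rho_lt_one.le)
  set Q : K := q ^ m with hQdef
  set U : K := u ^ m with hUdef
  have hQrho : ‖1 - Q‖ < rho p := lt_of_le_of_lt (my_norm_one_sub_pow_le hqn.le m) hq1'
  set r : K := qpow Q a1 with hrdef
  have hrn : ‖r‖ = 1 := qpow_norm_eq_one hpK hQrho a1
  have hr1 : ‖1 - r‖ ≤ ‖1 - Q‖ := qpow_one_sub_le hpK hQrho a1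
  have hQ1 : ‖1 - Q‖ < 1 := hQrho.trans_le rho_lt_one.le
  set M : ℝ := max 1 ‖U‖ with hMdef
  have hM : 1 ≤ M := le_max_left _ _
  have hvM : ‖U‖ ≤ M := le_max_right _ _
  have hD1 : (1 : ℝ) ≤ ‖1 - U‖ := by rw [hUdef]; exact hu m hm
  have hD0 : (0 : ℝ) < ‖1 - U‖ := lt_of_lt_of_le one_pos hD1
  have hMD : M ≤ ‖1 - U‖ := by
    rcases le_or_gt ‖U‖ 1 with h | h
    · rw [hMdef, max_eq_left h]; exact hD1
    · have hh : ‖1 - U‖ = ‖U‖ := by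
        rw [norm_sub_rev]
        exact my_norm_sub_eq_left (by simpa using h)
      rw [hMdef, max_eq_right h.le, hh]
  have hden : ∀ t : ℕ, ‖1 - U * r ^ t‖ = ‖1 - U‖ := by
    intro t
    have hsplit : 1 - U * r ^ t = (1 - U) + U * (1 - r ^ t) := by ring
    have hsmall : ‖U * (1 - r ^ t)‖ < ‖1 - U‖ := by
      rcases eq_or_ne U 0 with h0 | h0
      · rw [h0, zero_mul, norm_zero]; exact h0 ▸ hD0
      · have hU0 : 0 < ‖U‖ := norm_pos_iff.mpr h0
        calc ‖U * (1 - r ^ t)‖ = ‖U‖ * ‖1 - r ^ t‖ := norm_mul _ _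
          _ ≤ ‖U‖ * ‖1 - Q‖ := by
              apply mul_le_mul_of_nonneg_left _ (norm_nonneg U)
              exact le_trans (my_norm_one_sub_pow_le hrn.le t) hr1
          _ < ‖U‖ * 1 := by exact mul_lt_mul_of_pos_left hQ1 hU0
          _ = ‖U‖ := mul_one _
          _ ≤ M := hvM
          _ ≤ ‖1 - U‖ := hMD
    rw [hsplit, my_norm_add_eq_left hsmall]
  have hsum_eq : (∑ l ∈ Finset.range (i + 1), (i.choose l : K) * (-1) ^ l *
        (1 - qpow Q ((l : ℤ_[p]) * a1) * U)⁻¹)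
      = ∑ l ∈ Finset.range (i + 1), ((i.choose l : ℕ) : K) * (-1) ^ l * (1 - U * r ^ l)⁻¹ := by
    refine Finset.sum_congr rfl fun l _ => ?_
    rw [hrdef, ← qpow_natCast_mul hpK hQrho l a1, mul_comm U]
  rw [hsum_eq]
  have hS := core_sum_bound r U hrn.le hM hvM hD0 hden i
  simp only [norm_mul, norm_pow, norm_inv]
  have hBr : ‖1 - Q‖⁻¹ * ‖1 - r‖ ≤ 1 := by
    rcases eq_or_ne (1 - Q) 0 with h | h
    · simp [h]
    · calc ‖1 - Q‖⁻¹ * ‖1 - r‖ ≤ ‖1 - Q‖⁻¹ * ‖1 - Q‖ := by gcongr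
        _ = 1 := inv_mul_cancel₀ (norm_ne_zero_iff.mpr h)
  have hfinal : ‖u‖ ^ x * M ^ i / ‖1 - U‖ ^ (i + 1) ≤ 1 := by
    rcases le_or_gt ‖u‖ 1 with h | h
    · have hU1 : ‖U‖ ≤ 1 := by
        rw [hUdef, norm_pow]; exact pow_le_one₀ (norm_nonneg u) h
      have hM1 : M = 1 := by rw [hMdef, max_eq_left hU1]
      rw [hM1, one_pow, mul_one, div_le_one (by positivity)]
      calc ‖u‖ ^ x ≤ 1 := pow_le_one₀ (norm_nonneg u) h
        _ ≤ ‖1 - U‖ ^ (i + 1) := one_le_pow₀ hD1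
    · have hUgt : 1 < ‖U‖ := by
        rw [hUdef, norm_pow]
        exact one_lt_pow₀ h (by omega)
      have hDU : ‖1 - U‖ = ‖U‖ := by
        rw [norm_sub_rev]; exact my_norm_sub_eq_left (by simpa using hUgt)
      have hMU : M = ‖U‖ := by rw [hMdef, max_eq_right hUgt.le]
      have hux : ‖u‖ ^ x ≤ ‖U‖ := by
        rw [hUdef, norm_pow]
        exact pow_le_pow_right₀ h.le hx.le
      rw [hDU, hMU, div_le_one (by positivity)]
      calc ‖u‖ ^ x * ‖U‖ ^ i ≤ ‖U‖ * ‖U‖ ^ i :=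
            mul_le_mul_of_nonneg_right hux (by positivity)
        _ = ‖U‖ ^ (i + 1) := by ring
  have hDne : ‖1 - U‖ ≠ 0 := ne_of_gt hD0
  calc ‖u‖ ^ x * ‖1 - U‖⁻¹ * (‖1 - U‖ * (‖1 - Q‖⁻¹) ^ i *
        ‖∑ l ∈ Finset.range (i + 1), ((i.choose l : ℕ) : K) * (-1) ^ l * (1 - U * r ^ l)⁻¹‖)
      = ‖u‖ ^ x * (‖1 - Q‖⁻¹) ^ i *
        ‖∑ l ∈ Finset.range (i + 1), ((i.choose l : ℕ) : K) * (-1) ^ l * (1 - U * r ^ l)⁻¹‖ :=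
        real_cancel _ _ _ _ hDne
    _ ≤ ‖u‖ ^ x * (‖1 - Q‖⁻¹) ^ i * (‖1 - r‖ ^ i * M ^ i / ‖1 - U‖ ^ (i + 1)) := by
        apply mul_le_mul_of_nonneg_left hS (by positivity)
    _ = (‖1 - Q‖⁻¹ * ‖1 - r‖) ^ i * (‖u‖ ^ x * M ^ i / ‖1 - U‖ ^ (i + 1)) := by
        rw [mul_pow]; ring
    _ ≤ 1 ^ i * 1 := by
        apply mul_le_mul _ hfinal (by positivity) (by positivity)
        exact pow_le_pow_left₀ (by positivity) hBr i
    _ = 1 := by norm_num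
end
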